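/- Let T be a linear relation in a Krein space H with canonical decomposition H = H⁻[⊕]H⁺ and canonical symmetry J, and let λ ∈ ℂ∖{0} with λ ∉ σ_p(JT). Then λ ∈ σ_p(T) if and only if Ker_λ(T⁻(λ)) ≠ {0}, where T⁻(λ) = {(P⁻x, P⁻y) : (x,y) ∈ T, y − λx ∈ H⁻} is a relation in H⁻. -/

import Mathlib

open Complex

noncomputable section

variable {H : Type*} [NormedAddCommGroup H] [InnerProductSpace ℂ H] [CompleteSpace H]

/-- Indefinite inner product `[x,y] = ⟪x, J y⟫`. -/
def kip (J : H →L[ℂ] H) (x y : H) : ℂ := inner ℂ x (J y)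

/-- `H⁻ = ker (J + id)`. -/
def negSet (J : H →L[ℂ] H) : Set H := {x | J x = -x}

/-- `H⁺ = ker (J - id)`. -/
def posSet (J : H →L[ℂ] H) : Set H := {x | J x = x}

/-- The canonical projection `P⁻ = (id - J)/2` onto `H⁻`. -/
def Pm (J : H →L[ℂ] H) (x : H) : H := (2⁻¹ : ℂ) • (x - J x)

/-- The canonical projection `P⁺ = (id + J)/2` onto `H⁺`. -/
def Pp (J : H →L[ℂ] H) (x : H) : H := (2⁻¹ : ℂ) • (x + J x)

/-- `J` is a fundamental symmetry: self-adjoint and an involution. -/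
structure IsFundSym (J : H →L[ℂ] H) : Prop where
  symm : ∀ x y : H, (inner ℂ (J x) y : ℂ) = inner ℂ x (J y)
  invol : ∀ x : H, J (J x) = x

def domSet (A : Set (H × H)) : Set H := {x | ∃ y, (x, y) ∈ A}
def ranSet (A : Set (H × H)) : Set H := {y | ∃ x, (x, y) ∈ A}
def mulSet (A : Set (H × H)) : Set H := {y | ((0 : H), y) ∈ A}
def kerl (A : Set (H × H)) (l : ℂ) : Set H := {x | (x, l • x) ∈ A}
def pointSpec (A : Set (H × H)) : Set ℂ := {l | ∃ x : H, x ≠ 0 ∧ (x, l • x) ∈ A}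
/-- The relation `A - l·I`. -/
def shiftRel (A : Set (H × H)) (l : ℂ) : Set (H × H) := {p | ∃ q ∈ A, p = (q.1, q.2 - l • q.1)}
def invRel (A : Set (H × H)) : Set (H × H) := {p | (p.2, p.1) ∈ A}
/-- Composition `A ∘ B` (apply `B` first). -/
def relComp (A B : Set (H × H)) : Set (H × H) := {p | ∃ y, (p.1, y) ∈ B ∧ (y, p.2) ∈ A}
def imageRel (A : Set (H × H)) (M : Set H) : Set H := {y | ∃ x ∈ M, (x, y) ∈ A}
def setSum (A B : Set H) : Set H := {z | ∃ a ∈ A, ∃ b ∈ B, z = a + b}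
/-- The relation `JT = {(x, Jy) : (x,y) ∈ T}`. -/
def JRel (J : H →L[ℂ] H) (A : Set (H × H)) : Set (H × H) := {p | ∃ q ∈ A, p = (q.1, J q.2)}
/-- Krein-space adjoint `T^c`. -/
def adjRel (J : H →L[ℂ] H) (T : Set (H × H)) : Set (H × H) :=
  {q | ∀ p ∈ T, kip J q.2 p.1 = kip J q.1 p.2}
def IsSymRel (J : H →L[ℂ] H) (T : Set (H × H)) : Prop := T ⊆ adjRel J T
def IsDissipative (J : H →L[ℂ] H) (T : Set (H × H)) : Prop := ∀ p ∈ T, 0 ≤ (kip J p.1 p.2).im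
/-- The operator part `T_s = {(x,y) ∈ T : y ⟂ Ind T}`. -/
def opPart (T : Set (H × H)) : Set (H × H) :=
  {p | p ∈ T ∧ ∀ z ∈ mulSet T, (inner ℂ p.2 z : ℂ) = 0}
/-- `‖T_s P⁻‖`: norm of `x ↦ T_s x` as an operator on `H⁻`. -/
def normTsPm (J : H →L[ℂ] H) (T : Set (H × H)) : ℝ :=
  sSup {r | ∃ p ∈ opPart T, p.1 ∈ negSet J ∧ ‖p.1‖ ≤ 1 ∧ r = ‖p.2‖}
/-- `‖P⁻ T_s P⁻‖`: norm of `x ↦ P⁻(T_s x)` as an operator on `H⁻`. -/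
def normPmTsPm (J : H →L[ℂ] H) (T : Set (H × H)) : ℝ :=
  sSup {r | ∃ p ∈ opPart T, p.1 ∈ negSet J ∧ ‖p.1‖ ≤ 1 ∧ r = ‖Pm J p.2‖}
/-- The region `Γ` determined by `m = ‖T_s P⁻‖`, `c = ‖P⁻T_s P⁻‖`. -/
def GammaSet (m c : ℝ) : Set ℂ :=
  {l | l.im ≠ 0 ∧ m < |l.im| ∧
    ‖(if 0 ≤ l.re then (1 : ℂ) else -1) + (c : ℂ) / l‖ < 2 / (1 + (m / |l.im|) ^ 2)}
/-- `C = (ℂ∖ℝ) ∖ Γ`. -/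
def CSet (m c : ℝ) : Set ℂ := {l : ℂ | l.im ≠ 0} \ GammaSet m c

/-- The relation `T⁻(λ) = {(P⁻x, P⁻y) : (x,y) ∈ T, y − λx ∈ H⁻}` in `H⁻`. -/
def TminusRel (J : H →L[ℂ] H) (T : Set (H × H)) (l : ℂ) : Set (H × H) :=
  {p | ∃ q ∈ T, q.2 - l • q.1 ∈ negSet J ∧ p = (Pm J q.1, Pm J q.2)}

/-- Lemma 2.7 d): for `λ ≠ 0` with `λ ∉ σ_p(JT)`, one has
`λ ∈ σ_p(T)` iff `Ker_λ(T⁻(λ)) ≠ {0}`. -/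
theorem statement8 (J : H →L[ℂ] H) (hJ : IsFundSym J)
    (T : Submodule ℂ (H × H))
    (l : ℂ) (hl0 : l ≠ 0)
    (hl : l ∉ pointSpec (JRel J (T : Set (H × H)))) :
    l ∈ pointSpec (T : Set (H × H)) ↔
      ∃ x : H, x ≠ 0 ∧ (x, l • x) ∈ TminusRel J (T : Set (H × H)) l := by
  constructor
  · rintro ⟨x, hx, hxT⟩
    have hPm : Pm J x ≠ 0 := by
      intro h
      have h2 : x - J x = 0 := by
        have h' : (2⁻¹ : ℂ) • (x - J x) = 0 := h
        rcases smul_eq_zero.mp h' with h'' | h''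
        · norm_num at h''
        · exact h''
      have hxJ : J x = x := (sub_eq_zero.mp h2).symm
      exact hl ⟨x, hx, ⟨(x, l • x), hxT, by simp [JRel, map_smul, hxJ]⟩⟩
    refine ⟨Pm J x, hPm, ⟨(x, l • x), hxT, ?_, ?_⟩⟩
    · show l • x - l • x ∈ negSet J
      simp [negSet]
    · show (Pm J x, l • Pm J x) = (Pm J x, Pm J (l • x))
      simp only [Pm, map_smul, smul_sub, smul_comm l]
  · rintro ⟨x, hx, q, hqT, hneg, heq⟩
    have h1 : x = Pm J q.1 := (Prod.ext_iff.mp heq).1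
    have h2 : l • x = Pm J q.2 := (Prod.ext_iff.mp heq).2
    have hJy : J (q.2 - l • q.1) = -(q.2 - l • q.1) := hneg
    have e1 : Pm J (q.2 - l • q.1) = q.2 - l • q.1 := by
      rw [Pm, hJy, sub_neg_eq_add, ← two_smul ℂ, smul_smul]
      norm_num
    have e2 : Pm J (q.2 - l • q.1) = Pm J q.2 - l • Pm J q.1 := by
      simp only [Pm, map_sub, map_smul, smul_sub]
      module
    have key : q.2 - l • q.1 = 0 := by
      rw [← e1, e2, ← h1, ← h2, sub_self]
    have hv : q.2 = l • q.1 := by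
      have := sub_eq_zero.mp key
      exact this
    have hq1 : q.1 ≠ 0 := by
      intro h
      apply hx
      rw [h1, h, Pm]
      simp
    refine ⟨q.1, hq1, ?_⟩
    have : (q.1, q.2) ∈ (T : Set (H × H)) := hqT
    rwa [hv] at this
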